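/- arXiv:1803.05051 — 2 statements merged into one kernel-verified Lean document; each statement's English description precedes it below -/
import Mathlib

section
/- For all integers k ≥ 3, ℓ ≥ 3, and 2 ≤ r ≤ k−1, and every integer n ≥ k(ℓ+1)r(1 + ln r), every coloring of the k-element subsets of an n-element set with r colors yields a monochromatic copy of the k-uniform loose path P_ℓ^(k) of length ℓ. -/
private lemma divmod_div (d t q : ℕ) (hd : 0 < d) (hq : q < d) : (d * t + q) / d = t := by
  rw [Nat.mul_add_div hd, Nat.div_eq_of_lt hq, add_zero]

private lemma divmod_mod (d t q : ℕ) (hq : q < d) : (d * t + q) % d = q := by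
  rw [add_comm, Nat.add_mul_mod_self_left]; exact Nat.mod_eq_of_lt hq

private lemma aux_pigeonhole {ι β : Type} [Fintype β] [DecidableEq β]
    (s : Finset ι) (f : ι → β) (B : ℕ) (h : Fintype.card β * B < s.card) :
    ∃ c : β, B < (s.filter fun t => f t = c).card := by
  by_contra hc
  push_neg at hc
  have h1 : s.card = ∑ c : β, (s.filter fun t => f t = c).card :=
    Finset.card_eq_sum_card_fiberwise (fun x _ => Finset.mem_univ (f x))
  have h2 : ∑ c : β, (s.filter fun t => f t = c).card ≤ ∑ _c : β, B :=
    Finset.sum_le_sum (fun c _ => hc c)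
  simp only [Finset.sum_const, smul_eq_mul, Finset.card_univ] at h2
  omega

private lemma pick_distinct (ℓ : ℕ) (S : ℕ → Finset ℕ) (h : ∀ i < ℓ, ℓ ≤ (S i).card) :
    ∃ τ : ℕ → ℕ, Set.InjOn τ (Set.Iio ℓ) ∧ ∀ i < ℓ, τ i ∈ S i := by
  suffices H : ∀ s ≤ ℓ, ∃ τ : ℕ → ℕ, Set.InjOn τ (Set.Iio s) ∧ ∀ i < s, τ i ∈ S i from
    H ℓ le_rfl
  intro s hs
  induction s with
  | zero => exact ⟨id, by simp [Set.InjOn], by omega⟩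
  | succ s ih =>
    obtain ⟨τ, hinj, hmem⟩ := ih (by omega)
    set U : Finset ℕ := (Finset.range s).image τ with hU
    have hUcard : U.card ≤ s := le_trans (Finset.card_image_le) (by simp)
    have hne : (S s \ U).Nonempty := by
      rw [← Finset.card_pos]
      have h1 := Finset.le_card_sdiff U (S s)
      have h2 := h s (by omega)
      omega
    obtain ⟨w, hw⟩ := hne
    rw [Finset.mem_sdiff] at hw
    refine ⟨Function.update τ s w, ?_, ?_⟩
    · intro a ha b hb hab
      simp only [Set.mem_Iio] at ha hb
      have hkey : ∀ x, x < s → Function.update τ s w x ∈ U := by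
        intro x hx
        rw [Function.update_of_ne (by omega)]
        exact hU ▸ Finset.mem_image_of_mem τ (Finset.mem_range.mpr hx)
      rcases Nat.lt_or_ge a s with ha' | ha' <;> rcases Nat.lt_or_ge b s with hb' | hb'
      · rw [Function.update_of_ne (by omega), Function.update_of_ne (by omega)] at hab
        exact hinj ha' hb' hab
      · have hb'' : b = s := by omega
        rw [hb'', Function.update_self] at hab
        exact absurd (hab ▸ hkey a ha') hw.2
      · have ha'' : a = s := by omega
        rw [ha'', Function.update_self] at hab
        exact absurd (hab ▸ hkey b hb') hw.2
      · omega
    · intro i hi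
      rcases Nat.lt_or_ge i s with hi' | hi'
      · rw [Function.update_of_ne (by omega)]; exact hmem i hi'
      · have : i = s := by omega
        rw [this, Function.update_self]; exact hw.1

private lemma exists_graph_path (ℓ : ℕ) (Adj : ℕ → ℕ → Prop) [DecidableRel Adj]
    (hsymm : ∀ {x y}, Adj x y → Adj y x) :
    ∀ (N : ℕ) (V : Finset ℕ), V.card ≤ N →
    2 * ℓ * V.card < ((V ×ˢ V).filter fun p => Adj p.1 p.2).card →
    ∃ g : ℕ → ℕ, Set.InjOn g (Set.Iio (ℓ+1)) ∧ (∀ i ≤ ℓ, g i ∈ V) ∧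
      ∀ i < ℓ, Adj (g i) (g (i+1)) := by
  intro N
  induction N with
  | zero =>
    intro V hV hcount
    interval_cases h : V.card
    · rw [Finset.card_eq_zero] at h
      subst h
      simp at hcount
  | succ N ih =>
    intro V hV hcount
    by_cases hdeg : ∃ v ∈ V, (V.filter fun u => Adj v u).card ≤ ℓ
    · -- delete a low-degree vertex
      obtain ⟨v, hv, hdv⟩ := hdeg
      set V' := V.erase v with hV'
      set P := (V ×ˢ V).filter fun p => Adj p.1 p.2 with hP
      set P' := (V' ×ˢ V').filter fun p => Adj p.1 p.2 with hP'
      have hsub : P' ⊆ P := by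
        apply Finset.filter_subset_filter
        exact Finset.product_subset_product (Finset.erase_subset v V) (Finset.erase_subset v V)
      have hdiff : P \ P' ⊆
          ({v} ×ˢ (V.filter fun u => Adj v u)) ∪ ((V.filter fun u => Adj v u) ×ˢ {v}) := by
        intro p hp
        rw [Finset.mem_sdiff] at hp
        obtain ⟨hp1, hp2⟩ := hp
        rw [hP, Finset.mem_filter, Finset.mem_product] at hp1
        obtain ⟨⟨hpa, hpb⟩, hadj⟩ := hp1
        have hcase : p.1 = v ∨ p.2 = v := by
          by_contra hcon
          push_neg at hcon
          apply hp2
          rw [hP', Finset.mem_filter, Finset.mem_product]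
          exact ⟨⟨Finset.mem_erase.mpr ⟨hcon.1, hpa⟩, Finset.mem_erase.mpr ⟨hcon.2, hpb⟩⟩, hadj⟩
        rw [Finset.mem_union]
        rcases hcase with h1 | h1
        · left
          rw [Finset.mem_product, Finset.mem_singleton, Finset.mem_filter]
          exact ⟨h1, hpb, h1 ▸ hadj⟩
        · right
          rw [Finset.mem_product, Finset.mem_singleton, Finset.mem_filter]
          exact ⟨⟨hpa, h1 ▸ (hsymm hadj)⟩, h1⟩
      have hdcard : (P \ P').card ≤ 2 * ℓ := by
        calc (P \ P').card ≤ (({v} ×ˢ (V.filter fun u => Adj v u)) ∪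
            ((V.filter fun u => Adj v u) ×ˢ {v})).card := Finset.card_le_card hdiff
        _ ≤ ({v} ×ˢ (V.filter fun u => Adj v u)).card +
            ((V.filter fun u => Adj v u) ×ˢ {v}).card := Finset.card_union_le _ _
        _ ≤ 2 * ℓ := by
            rw [Finset.card_product, Finset.card_product]
            simp only [Finset.card_singleton, one_mul, mul_one]
            omega
      have hPle : P.card ≤ P'.card + 2 * ℓ := by
        have := Finset.card_sdiff_add_card_eq_card hsub
        omega
      have hVc : V'.card = V.card - 1 := Finset.card_erase_of_mem hv
      have hvpos : 1 ≤ V.card := Finset.card_pos.mpr ⟨v, hv⟩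
      have hcount' : 2 * ℓ * V'.card < P'.card := by
        obtain ⟨m, hm⟩ : ∃ m, V.card = m + 1 := ⟨V.card - 1, by omega⟩
        have hV'm : V'.card = m := by omega
        have e1 : 2 * ℓ * V.card = 2 * ℓ * V'.card + 2 * ℓ := by
          rw [hV'm, hm]; ring
        linarith
      obtain ⟨g, h1, h2, h3⟩ := ih V' (by omega) hcount'
      exact ⟨g, h1, fun i hi => Finset.mem_of_mem_erase (h2 i hi), h3⟩
    · -- min degree ≥ ℓ + 1 : greedy path
      push_neg at hdeg
      have hne : V.Nonempty := by
        rcases Finset.eq_empty_or_nonempty V with h | h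
        · subst h; simp at hcount
        · exact h
      obtain ⟨v0, hv0⟩ := hne
      have key : ∀ s, s ≤ ℓ → ∃ g : ℕ → ℕ, Set.InjOn g (Set.Iio (s+1)) ∧
          (∀ i ≤ s, g i ∈ V) ∧ ∀ i < s, Adj (g i) (g (i+1)) := by
        intro s hs
        induction s with
        | zero =>
          refine ⟨fun _ => v0, ?_, fun i _ => hv0, by omega⟩
          intro a ha b hb _
          simp only [Set.mem_Iio] at ha hb
          omega
        | succ s ihs =>
          obtain ⟨g, hinj, hmem, hadj⟩ := ihs (by omega)
          set U : Finset ℕ := (Finset.range (s+1)).image g with hU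
          have hUcard : U.card ≤ s + 1 := le_trans Finset.card_image_le (by simp)
          have hgs : g s ∈ V := hmem s le_rfl
          have hNcard := hdeg (g s) hgs
          have hne2 : ((V.filter fun u => Adj (g s) u) \ U).Nonempty := by
            rw [← Finset.card_pos]
            have := Finset.le_card_sdiff U (V.filter fun u => Adj (g s) u)
            omega
          obtain ⟨w, hw⟩ := hne2
          rw [Finset.mem_sdiff, Finset.mem_filter] at hw
          obtain ⟨⟨hwV, hwAdj⟩, hwU⟩ := hw
          have hkey : ∀ x, x ≤ s → Function.update g (s+1) w x ∈ U := by
            intro x hx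
            rw [Function.update_of_ne (by omega)]
            exact hU ▸ Finset.mem_image_of_mem g (Finset.mem_range.mpr (by omega))
          refine ⟨Function.update g (s+1) w, ?_, ?_, ?_⟩
          · intro a ha b hb hab
            simp only [Set.mem_Iio] at ha hb
            rcases Nat.lt_or_ge a (s+1) with ha' | ha' <;>
              rcases Nat.lt_or_ge b (s+1) with hb' | hb'
            · rw [Function.update_of_ne (by omega), Function.update_of_ne (by omega)] at hab
              exact hinj (Set.mem_Iio.mpr ha') (Set.mem_Iio.mpr hb') hab
            · have hb'' : b = s + 1 := by omega
              rw [hb'', Function.update_self] at hab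
              exact absurd (hab ▸ hkey a (by omega)) hwU
            · have ha'' : a = s + 1 := by omega
              rw [ha'', Function.update_self] at hab
              exact absurd (hab ▸ hkey b (by omega)) hwU
            · omega
          · intro i hi
            rcases Nat.lt_or_ge i (s+1) with hi' | hi'
            · rw [Function.update_of_ne (by omega)]
              exact hmem i (by omega)
            · have : i = s + 1 := by omega
              rw [this, Function.update_self]
              exact hwV
          · intro i hi
            rcases Nat.lt_or_ge i s with hi' | hi'
            · rw [Function.update_of_ne (by omega), Function.update_of_ne (by omega)]
              exact hadj i hi'
            · have : i = s := by omega
              subst this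
              rw [Function.update_of_ne (by omega), Function.update_self]
              exact hwAdj
      exact key ℓ le_rfl

/-- The coloring `χ` of the `k`-element subsets contains a monochromatic copy of the
`k`-uniform loose path of length `ℓ`: there are a color `c` and distinct vertices
`f 0, …, f ((k-1)ℓ)` such that each of the `ℓ` consecutive edges
`{f (i(k-1)), …, f (i(k-1)+k-1)}` (consecutive edges sharing exactly one vertex)
receives color `c`. -/
def HasMonoLoosePath {α : Type} [DecidableEq α] {r : ℕ} (k ℓ : ℕ)
    (χ : Finset α → Fin r) : Prop :=
  ∃ c : Fin r, ∃ f : ℕ → α, Set.InjOn f (Set.Iio ((k - 1) * ℓ + 1)) ∧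
    ∀ i < ℓ, χ ((Finset.Ico (i * (k - 1)) (i * (k - 1) + k)).image f) = c

theorem loosePath_dfs_bound_simple (k ℓ r : ℕ) (hk : 3 ≤ k) (hl : 3 ≤ ℓ) (hr2 : 2 ≤ r)
    (hrk : r ≤ k - 1) (n : ℕ)
    (hn : (k : ℝ) * (ℓ + 1) * r * (1 + Real.log r) ≤ n)
    (χ : Finset (Fin n) → Fin r) :
    HasMonoLoosePath k ℓ χ := by
  classical
  have hk1 : 0 < k - 1 := by omega
  have hk2 : 0 < k - 2 := by omega
  set J : ℕ := 2 * (r * ℓ) + 2 with hJ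
  set T : ℕ := r * ℓ with hT
  -- size bound
  have hn1 : k * (ℓ + 1) * r ≤ n := by
    have hr1 : (1:ℝ) ≤ (r:ℝ) := by exact_mod_cast hr2.trans' one_le_two
    have hlog : (0:ℝ) ≤ Real.log r := Real.log_nonneg hr1
    have h1 : ((k * (ℓ + 1) * r : ℕ) : ℝ) ≤ (n : ℝ) := by
      push_cast
      nlinarith [hn, hlog, mul_nonneg (mul_nonneg (by positivity : (0:ℝ) ≤ (k:ℝ))
        (by positivity : (0:ℝ) ≤ (ℓ:ℝ)+1)) (by positivity : (0:ℝ) ≤ (r:ℝ))]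
    exact_mod_cast h1
  have hsize : J + T * (k - 2) ≤ n := by
    have hk22 : k - 2 + 2 = k := by omega
    have e1 : T * (k - 2) + 2 * (r * ℓ) = k * ℓ * r := by
      calc T * (k - 2) + 2 * (r * ℓ) = (r * ℓ) * ((k - 2) + 2) := by rw [hT]; ring
        _ = (r * ℓ) * k := by rw [hk22]
        _ = k * ℓ * r := by ring
    have e3 : 6 ≤ k * r := le_trans (by norm_num) (Nat.mul_le_mul hk hr2)
    calc J + T * (k - 2) = 2 * (r * ℓ) + 2 + T * (k - 2) := by rw [hJ, hT]
      _ = (T * (k - 2) + 2 * (r * ℓ)) + 2 := by ring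
      _ = k * ℓ * r + 2 := by rw [e1]
      _ ≤ k * ℓ * r + k * r := by have := e3; omega
      _ = k * (ℓ + 1) * r := by ring
      _ ≤ n := hn1
  have hn0 : 0 < n := by
    have h2 : 2 ≤ J := by rw [hJ]; omega
    omega
  have hJn : J ≤ n := le_trans (Nat.le_add_right _ _) hsize
  -- vertices
  set vert : ℕ → Fin n := fun m => ⟨m % n, Nat.mod_lt m hn0⟩ with hvert
  have vert_inj : ∀ {a b : ℕ}, a < n → b < n → vert a = vert b → a = b := by
    intro a b ha hb h
    have h2 := congrArg Fin.val h
    simpa [hvert, Nat.mod_eq_of_lt ha, Nat.mod_eq_of_lt hb] using h2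
  set Bidx : ℕ → ℕ → ℕ := fun t q => J + ((k - 2) * t + q) with hBidx
  have hBge : ∀ t q, J ≤ Bidx t q := fun t q => Nat.le_add_right _ _
  have hBlt : ∀ t q, t < T → q < k - 2 → Bidx t q < n := by
    intro t q ht hq
    have h1 : (k - 2) * t + q < (k - 2) * T := by
      calc (k - 2) * t + q < (k - 2) * t + (k - 2) := by omega
        _ = (k - 2) * (t + 1) := by ring
        _ ≤ (k - 2) * T := Nat.mul_le_mul_left _ (by omega)
    have h2 : (k - 2) * T = T * (k - 2) := mul_comm _ _
    have h3 : Bidx t q < J + T * (k - 2) := by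
      rw [hBidx]
      exact Nat.add_lt_add_left (h2 ▸ h1) J
    exact lt_of_lt_of_le h3 hsize
  set Eset : ℕ → ℕ → ℕ → Finset (Fin n) := fun x y t =>
    insert (vert x) (insert (vert y)
      ((Finset.range (k - 2)).image fun q => vert (Bidx t q))) with hEset
  have Eset_comm : ∀ x y t, Eset x y t = Eset y x t := by
    intro x y t
    simp only [hEset]
    rw [Finset.insert_comm]
  set ψ : ℕ → ℕ → ℕ → Fin r := fun x y t => χ (Eset x y t) with hψ
  -- pigeonhole 1 : a popular color for each pair
  have ph1 : ∀ x y : ℕ, ∃ c : Fin r,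
      ℓ ≤ ((Finset.range T).filter fun t => ψ x y t = c).card := by
    intro x y
    obtain ⟨l0, hl0⟩ : ∃ l0, ℓ = l0 + 1 := ⟨ℓ - 1, by omega⟩
    have hlt : Fintype.card (Fin r) * (ℓ - 1) < (Finset.range T).card := by
      rw [Fintype.card_fin, Finset.card_range, hT, hl0]
      simp only [Nat.add_sub_cancel]
      have e : r * (l0 + 1) = r * l0 + r := by ring
      linarith
    obtain ⟨c, hc⟩ := aux_pigeonhole (Finset.range T) (ψ x y) (ℓ - 1) hlt
    exact ⟨c, by omega⟩
  choose cp hcp using ph1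
  -- pigeonhole 2 : a popular color among pairs
  set Vj : Finset ℕ := Finset.range J with hVj
  set s2 : Finset (ℕ × ℕ) := (Vj ×ˢ Vj).filter (fun p => p.1 ≠ p.2) with hs2
  have hs2card : s2.card = J * J - J := by
    have h1 : (Vj ×ˢ Vj).card = J * J := by
      rw [Finset.card_product, hVj, Finset.card_range]
    have h2 : ((Vj ×ˢ Vj).filter fun p => p.1 = p.2) = Vj.image (fun v => (v, v)) := by
      ext ⟨a, b⟩
      simp only [Finset.mem_filter, Finset.mem_product, Finset.mem_image, Prod.mk.injEq]
      constructor
      · rintro ⟨⟨ha, _⟩, he⟩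
        exact ⟨a, ha, rfl, he⟩
      · rintro ⟨v, hv, rfl, rfl⟩
        exact ⟨⟨hv, hv⟩, rfl⟩
    have h3 : ((Vj ×ˢ Vj).filter fun p => p.1 = p.2).card = J := by
      rw [h2, Finset.card_image_of_injective _ (fun a b h => congrArg Prod.fst h), hVj,
        Finset.card_range]
    have h4 := Finset.card_filter_add_card_filter_not
      (s := Vj ×ˢ Vj) (p := fun p : ℕ × ℕ => p.1 = p.2)
    have h5 : ((Vj ×ˢ Vj).filter fun p : ℕ × ℕ => ¬ p.1 = p.2) = s2 := by
      rw [hs2]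
    rw [h5] at h4
    omega
  have ph2 : ∃ c : Fin r, 2 * ℓ * J <
      (s2.filter fun p : ℕ × ℕ => cp (min p.1 p.2) (max p.1 p.2) = c).card := by
    apply aux_pigeonhole
    rw [hs2card, Fintype.card_fin]
    have e : J * J = r * (2 * ℓ * J) + 2 * J := by
      rw [hJ, hT]; ring
    have h2 : 2 ≤ J := by rw [hJ]; omega
    omega
  obtain ⟨cstar, hcstar⟩ := ph2
  -- the auxiliary graph and a long path in it
  set Adj : ℕ → ℕ → Prop := fun x y =>
    x < J ∧ y < J ∧ x ≠ y ∧ cp (min x y) (max x y) = cstar with hAdj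
  have hAdjSymm : ∀ {x y}, Adj x y → Adj y x := by
    intro x y h
    obtain ⟨h1, h2, h3, h4⟩ := h
    exact ⟨h2, h1, Ne.symm h3, by rwa [min_comm, max_comm]⟩
  have hconv : (s2.filter fun p : ℕ × ℕ => cp (min p.1 p.2) (max p.1 p.2) = cstar)
      = ((Vj ×ˢ Vj).filter fun p => Adj p.1 p.2) := by
    rw [hs2, Finset.filter_filter]
    apply Finset.filter_congr
    intro p hp
    rw [Finset.mem_product, hVj, Finset.mem_range, Finset.mem_range] at hp
    simp only [hAdj]
    constructor
    · rintro ⟨hne, hc⟩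
      exact ⟨hp.1, hp.2, hne, hc⟩
    · rintro ⟨_, _, hne, hc⟩
      exact ⟨hne, hc⟩
  have hpath := exists_graph_path ℓ Adj (fun h => hAdjSymm h) J Vj
    (by rw [hVj, Finset.card_range]) (by rw [hVj, Finset.card_range, ← hconv]; exact hcstar)
  obtain ⟨g, hginj, hgmem, hgadj⟩ := hpath
  have hgJ : ∀ i, i ≤ ℓ → g i < J := by
    intro i hi
    have := hgmem i hi
    rwa [hVj, Finset.mem_range] at this
  -- assign distinct blocks to the path edges
  set S : ℕ → Finset ℕ := fun i => (Finset.range T).filter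
      (fun t => ψ (min (g i) (g (i+1))) (max (g i) (g (i+1))) t = cstar) with hS
  have hScard : ∀ i < ℓ, ℓ ≤ (S i).card := by
    intro i hi
    obtain ⟨_, _, _, h4⟩ := hgadj i hi
    have := hcp (min (g i) (g (i+1))) (max (g i) (g (i+1)))
    rw [h4] at this
    exact this
  obtain ⟨τ, hτinj, hτmem⟩ := pick_distinct ℓ S hScard
  have hτT : ∀ i < ℓ, τ i < T := by
    intro i hi
    have := hτmem i hi
    rw [hS, Finset.mem_filter, Finset.mem_range] at this
    exact this.1
  have hτψ : ∀ i < ℓ, ψ (min (g i) (g (i+1))) (max (g i) (g (i+1))) (τ i) = cstar := by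
    intro i hi
    have := hτmem i hi
    rw [hS, Finset.mem_filter] at this
    exact this.2
  -- the final vertex map
  set code : ℕ → ℕ := fun m =>
    if m % (k-1) = 0 then g (m / (k-1)) else Bidx (τ (m / (k-1))) (m % (k-1) - 1) with hcode
  have code_j : ∀ m, m % (k-1) = 0 → code m = g (m / (k-1)) := by
    intro m h
    rw [hcode]
    simp [h]
  have code_m : ∀ m, m % (k-1) ≠ 0 → code m = Bidx (τ (m / (k-1))) (m % (k-1) - 1) := by
    intro m h
    rw [hcode]
    simp [h]
  have code_lt : ∀ m, m < (k-1) * ℓ + 1 → code m < n := by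
    intro m hm
    have hdm := Nat.div_add_mod m (k-1)
    have hmod := Nat.mod_lt m hk1
    rcases eq_or_ne (m % (k-1)) 0 with h0 | h0
    · have hdiv : m / (k-1) ≤ ℓ := by
        by_contra hcon
        push_neg at hcon
        have h1 : (k-1) * (ℓ+1) ≤ (k-1) * (m / (k-1)) := Nat.mul_le_mul_left _ hcon
        have h2 : (k-1) * (ℓ+1) = (k-1) * ℓ + (k-1) := by ring
        have h3 : 2 ≤ k - 1 := by omega
        linarith
      rw [code_j m h0]
      exact lt_of_lt_of_le (hgJ _ hdiv) hJn
    · have hdiv : m / (k-1) < ℓ := by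
        by_contra hcon
        push_neg at hcon
        have h1 : (k-1) * ℓ ≤ (k-1) * (m / (k-1)) := Nat.mul_le_mul_left _ hcon
        have h2 : 1 ≤ m % (k-1) := by omega
        linarith
      rw [code_m m h0]
      exact hBlt _ _ (hτT _ hdiv) (by omega)
  unfold HasMonoLoosePath
  refine ⟨cstar, fun m => vert (code m), ?_, ?_⟩
  · -- injectivity
    intro a ha b hb hab
    simp only [Set.mem_Iio] at ha hb
    have hca : code a < n := code_lt a ha
    have hcb : code b < n := code_lt b hb
    have hcode_eq : code a = code b := vert_inj hca hcb hab
    have hda := Nat.div_add_mod a (k-1)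
    have hdb := Nat.div_add_mod b (k-1)
    have hmoda := Nat.mod_lt a hk1
    have hmodb := Nat.mod_lt b hk1
    have hdiva : a % (k-1) = 0 → a / (k-1) ≤ ℓ := by
      intro h0
      by_contra hcon
      push_neg at hcon
      have h1 : (k-1) * (ℓ+1) ≤ (k-1) * (a / (k-1)) := Nat.mul_le_mul_left _ hcon
      have h2 : (k-1) * (ℓ+1) = (k-1) * ℓ + (k-1) := by ring
      have h3 : 2 ≤ k - 1 := by omega
      linarith
    have hdivb : b % (k-1) = 0 → b / (k-1) ≤ ℓ := by
      intro h0
      by_contra hcon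
      push_neg at hcon
      have h1 : (k-1) * (ℓ+1) ≤ (k-1) * (b / (k-1)) := Nat.mul_le_mul_left _ hcon
      have h2 : (k-1) * (ℓ+1) = (k-1) * ℓ + (k-1) := by ring
      have h3 : 2 ≤ k - 1 := by omega
      linarith
    have hdiva' : a % (k-1) ≠ 0 → a / (k-1) < ℓ := by
      intro h0
      by_contra hcon
      push_neg at hcon
      have h1 : (k-1) * ℓ ≤ (k-1) * (a / (k-1)) := Nat.mul_le_mul_left _ hcon
      have h2 : 1 ≤ a % (k-1) := by omega
      linarith
    have hdivb' : b % (k-1) ≠ 0 → b / (k-1) < ℓ := by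
      intro h0
      by_contra hcon
      push_neg at hcon
      have h1 : (k-1) * ℓ ≤ (k-1) * (b / (k-1)) := Nat.mul_le_mul_left _ hcon
      have h2 : 1 ≤ b % (k-1) := by omega
      linarith
    rcases eq_or_ne (a % (k-1)) 0 with ha0 | ha0 <;> rcases eq_or_ne (b % (k-1)) 0 with hb0 | hb0
    · -- both junctions
      rw [code_j a ha0, code_j b hb0] at hcode_eq
      have hii : a / (k-1) = b / (k-1) :=
        hginj (Set.mem_Iio.mpr (by omega : a / (k-1) < ℓ + 1))
          (Set.mem_Iio.mpr (by omega : b / (k-1) < ℓ + 1)) hcode_eq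
      rw [ha0, add_zero] at hda
      rw [hb0, add_zero] at hdb
      rw [← hda, ← hdb, hii]
    · -- junction vs middle : impossible
      exfalso
      have h1 : code a < J := by
        rw [code_j a ha0]; exact hgJ _ (hdiva ha0)
      have h2 : J ≤ code b := by
        rw [code_m b hb0]; exact hBge _ _
      omega
    · exfalso
      have h1 : code b < J := by
        rw [code_j b hb0]; exact hgJ _ (hdivb hb0)
      have h2 : J ≤ code a := by
        rw [code_m a ha0]; exact hBge _ _
      omega
    · -- both middles
      rw [code_m a ha0, code_m b hb0] at hcode_eq
      simp only [hBidx] at hcode_eq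
      have hcan : (k-2) * τ (a / (k-1)) + (a % (k-1) - 1)
          = (k-2) * τ (b / (k-1)) + (b % (k-1) - 1) := Nat.add_left_cancel hcode_eq
      have hqa : a % (k-1) - 1 < k - 2 := by omega
      have hqb : b % (k-1) - 1 < k - 2 := by omega
      have ht : τ (a / (k-1)) = τ (b / (k-1)) := by
        have h1 := congrArg (· / (k-2)) hcan
        simpa [divmod_div _ _ _ hk2 hqa, divmod_div _ _ _ hk2 hqb] using h1
      have hq : a % (k-1) - 1 = b % (k-1) - 1 := by
        have h1 := congrArg (· % (k-2)) hcan
        simpa [divmod_mod _ _ _ hqa, divmod_mod _ _ _ hqb] using h1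
      have hii : a / (k-1) = b / (k-1) :=
        hτinj (Set.mem_Iio.mpr (hdiva' ha0)) (Set.mem_Iio.mpr (hdivb' hb0)) ht
      have hqq : a % (k-1) = b % (k-1) := by omega
      rw [← hda, ← hdb, hii, hqq]
  · -- edges are monochromatic
    intro i hi
    have himg : (Finset.Ico (i * (k-1)) (i * (k-1) + k)).image (fun m => vert (code m))
        = Eset (g i) (g (i+1)) (τ i) := by
      ext z
      simp only [Finset.mem_image, Finset.mem_Ico, hEset, Finset.mem_insert, Finset.mem_range]
      constructor
      · rintro ⟨m, ⟨hm1, hm2⟩, rfl⟩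
        obtain ⟨q', hq'⟩ : ∃ q', m = (k-1) * i + q' :=
          ⟨m - i * (k-1), by rw [mul_comm]; exact (Nat.add_sub_cancel' hm1).symm⟩
        have hm2' : (k-1) * i + q' < (k-1) * i + k := by
          rw [← hq']
          rwa [mul_comm i (k-1)] at hm2
        have hq'k : q' < k := Nat.lt_of_add_lt_add_left hm2'
        rcases eq_or_ne q' 0 with h0 | h0
        · left
          subst h0
          rw [add_zero] at hq'
          subst hq'
          rw [code_j _ (Nat.mul_mod_right _ _), Nat.mul_div_cancel_left _ hk1]
        · rcases eq_or_ne q' (k-1) with h1 | h1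
          · right; left
            have hm' : m = (k-1) * (i+1) := by rw [hq', h1]; ring
            subst hm'
            rw [code_j _ (Nat.mul_mod_right _ _), Nat.mul_div_cancel_left _ hk1]
          · right; right
            have hq'k1 : q' < k - 1 := by omega
            have hdiv : m / (k-1) = i := by rw [hq']; exact divmod_div _ _ _ hk1 hq'k1
            have hmod : m % (k-1) = q' := by rw [hq']; exact divmod_mod _ _ _ hq'k1
            refine ⟨q' - 1, by omega, ?_⟩
            rw [code_m m (by rw [hmod]; exact h0), hdiv, hmod]
      · rintro (h | h | ⟨q, hq, h⟩)
        · refine ⟨i * (k-1), ⟨le_rfl, by omega⟩, ?_⟩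
          rw [code_j _ (Nat.mul_mod_left _ _), Nat.mul_div_cancel _ hk1, h]
        · refine ⟨i * (k-1) + (k-1), ⟨Nat.le_add_right _ _, Nat.add_lt_add_left (by omega) _⟩, ?_⟩
          have hm' : i * (k-1) + (k-1) = (k-1) * (i+1) := by ring
          rw [hm', code_j _ (Nat.mul_mod_right _ _), Nat.mul_div_cancel_left _ hk1, h]
        · refine ⟨i * (k-1) + (q+1), ⟨Nat.le_add_right _ _, Nat.add_lt_add_left (by omega) _⟩, ?_⟩
          have hm' : i * (k-1) + (q+1) = (k-1) * i + (q+1) := by ring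
          have hqk1 : q + 1 < k - 1 := by omega
          have hdiv : (i * (k-1) + (q+1)) / (k-1) = i := by
            rw [hm']; exact divmod_div _ _ _ hk1 hqk1
          have hmod : (i * (k-1) + (q+1)) % (k-1) = q + 1 := by
            rw [hm']; exact divmod_mod _ _ _ hqk1
          rw [← h, code_m _ (by rw [hmod]; omega), hdiv, hmod]
          simp
    rw [himg]
    have hpsi := hτψ i hi
    rw [hψ] at hpsi
    rcases le_total (g i) (g (i+1)) with hle | hle
    · rwa [min_eq_left hle, max_eq_right hle] at hpsi
    · rw [min_eq_right hle, max_eq_left hle] at hpsi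
      rw [Eset_comm]
      exact hpsi
end

section
/- Let k ≥ 2, ℓ ≥ 1, and 2 ≤ m ≤ k be integers, and let W_1, …, W_{m−1}, V_m be pairwise disjoint finite sets of vertices. If |W_i| ≥ ℓ for every i = 1, …, m−1, and |V_m| ≥ ℓ(k−m)+1 in case m ≤ k−1 (respectively |V_m| ≥ ℓ in case m = k), then the m-partite complete k-uniform hypergraph K^(k)(W_1, …, W_{m−1}, V_m) contains a copy of the loose path P_ℓ^(k). -/
private noncomputable def ppick {α : Type} (x₀ : α) (S : Finset α) (n : ℕ) : α :=
  S.toList.getD n x₀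

private lemma ppick_mem {α : Type} (x₀ : α) {S : Finset α} {n : ℕ} (h : n < S.card) :
    ppick x₀ S n ∈ S := by
  rw [ppick, List.getD_eq_getElem _ _ (by simpa using h)]
  exact Finset.mem_toList.mp (S.toList.getElem_mem _)

private lemma ppick_inj {α : Type} (x₀ : α) {S : Finset α} {a b : ℕ}
    (ha : a < S.card) (hb : b < S.card) (h : ppick x₀ S a = ppick x₀ S b) : a = b := by
  rw [ppick, ppick, List.getD_eq_getElem _ _ (by simpa using ha),
    List.getD_eq_getElem _ _ (by simpa using hb)] at h
  exact S.nodup_toList.getElem_inj_iff.mp h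

private lemma mod_decomp {K a q : ℕ} (hq : q < K) : (a * K + q) % K = q := by
  rw [mul_comm, Nat.mul_add_mod, Nat.mod_eq_of_lt hq]

private lemma div_decomp {K a q : ℕ} (hq : q < K) : (a * K + q) / K = a := by
  rw [mul_comm, Nat.mul_add_div (by omega), Nat.div_eq_of_lt hq, add_zero]

private lemma mul_add_cancel' {c a r a' r' : ℕ} (hr : r < c) (hr' : r' < c)
    (h : a * c + r = a' * c + r') : a = a' ∧ r = r' := by
  have e1 : r = r' := by
    have h1 := mod_decomp (a := a) hr
    have h2 := mod_decomp (a := a') hr'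
    rw [h] at h1; omega
  have e2 : a * c = a' * c := by omega
  exact ⟨Nat.eq_of_mul_eq_mul_right (by omega) e2, e1⟩

private lemma card_image_inter {α : Type} [DecidableEq α] (f : ℕ → α) (E T : Finset ℕ)
    (S : Finset α) (hinj : Set.InjOn f E) (hTE : T ⊆ E)
    (hT : ∀ p ∈ E, (f p ∈ S ↔ p ∈ T)) :
    (E.image f ∩ S).card = T.card := by
  have himg : E.image f ∩ S = T.image f := by
    ext x
    simp only [Finset.mem_inter, Finset.mem_image]
    constructor
    · rintro ⟨⟨p, hp, rfl⟩, hx⟩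
      exact ⟨p, (hT p hp).mp hx, rfl⟩
    · rintro ⟨p, hp, rfl⟩
      exact ⟨⟨p, hTE hp, rfl⟩, (hT p (hTE hp)).mpr hp⟩
  rw [himg]
  exact Finset.card_image_of_injOn (hinj.mono (Finset.coe_subset.mpr hTE))

/-- Construction for the case `m < k`. -/
private noncomputable def fA {α : Type} (x₀ : α) (k ℓ m : ℕ) (hm2 : 2 ≤ m) (hmk : m < k)
    (W : Fin (m - 1) → Finset α) (Vm : Finset α) (p : ℕ) : α :=
  if h : 1 ≤ p % (k-1) ∧ p % (k-1) ≤ m - 1 then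
    ppick x₀ (W ⟨p % (k-1) - 1, by omega⟩) (p / (k-1))
  else ppick x₀ Vm (if p % (k-1) = 0 then p / (k-1)
    else (ℓ+1) + (p / (k-1)) * (k-1-m) + (p % (k-1) - m))

/-- Construction for the case `m = k`. -/
private noncomputable def fB {α : Type} (x₀ : α) (k : ℕ) (hk : 2 ≤ k)
    (W : Fin (k - 1) → Finset α) (Vm : Finset α) (p : ℕ) : α :=
  if p % (k-1) = 0 then
    (if (p/(k-1)) % 2 = 0 then ppick x₀ (W ⟨k-2, by omega⟩) (p/(k-1)/2)
     else ppick x₀ Vm (p/(k-1)/2))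
  else ppick x₀ (W ⟨p % (k-1) - 1,
      by have := Nat.mod_lt p (show 0 < k-1 by omega); omega⟩) (p / (k-1))

/-- The complete `m`-partite `k`-uniform hypergraph `K^(k)(W 0, …, W (m-2), Vm)`
(all `k`-element sets with exactly one vertex in each `W i` and `k-m+1` vertices
in `Vm`) contains a copy of the loose path `P_ℓ^(k)`, provided `|W i| ≥ ℓ` for all
`i` and `|Vm| ≥ ℓ(k-m)+1` when `m ≤ k-1`, respectively `|Vm| ≥ ℓ` when `m = k`.
The copy is given by distinct vertices `f 0, …, f ((k-1)ℓ)`, the `i`-th edge being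
`{f (i(k-1)), …, f (i(k-1)+k-1)}`. -/
theorem completeMultipartite_contains_loosePath {α : Type} [DecidableEq α]
    (k ℓ m : ℕ) (hk : 2 ≤ k) (hl : 1 ≤ ℓ) (hm2 : 2 ≤ m) (hmk : m ≤ k)
    (W : Fin (m - 1) → Finset α) (Vm : Finset α)
    (hWW : ∀ i j, i ≠ j → Disjoint (W i) (W j))
    (hWV : ∀ i, Disjoint (W i) Vm)
    (hW : ∀ i, ℓ ≤ (W i).card)
    (hV₁ : m ≤ k - 1 → ℓ * (k - m) + 1 ≤ Vm.card)
    (hV₂ : m = k → ℓ ≤ Vm.card) :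
    ∃ f : ℕ → α, Set.InjOn f (Set.Iio ((k - 1) * ℓ + 1)) ∧
      ∀ i < ℓ,
        (∀ j, ((Finset.Ico (i * (k - 1)) (i * (k - 1) + k)).image f ∩ W j).card = 1) ∧
        ((Finset.Ico (i * (k - 1)) (i * (k - 1) + k)).image f ∩ Vm).card = k - m + 1 := by
  have hVmpos : 0 < Vm.card := by
    rcases eq_or_lt_of_le hmk with h | h
    · have := hV₂ h; omega
    · have := hV₁ (by omega); omega
  obtain ⟨x₀, hx₀⟩ := Finset.card_pos.mp hVmpos
  have hmul : ∀ i, i < ℓ → i*(k-1)+k ≤ (k-1)*ℓ+1 := by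
    intro i hi
    have h1 : (i+1)*(k-1) ≤ ℓ*(k-1) := Nat.mul_le_mul (by omega) (le_refl _)
    have h2 : (i+1)*(k-1) = i*(k-1)+(k-1) := by ring
    have h3 : ℓ*(k-1) = (k-1)*ℓ := by ring
    omega
  have hdivlt : ∀ p, p ≤ (k-1)*ℓ → 1 ≤ p % (k-1) → p / (k-1) < ℓ := by
    intro p hp h1
    by_contra hc
    have h3 : ℓ * (k-1) ≤ p / (k-1) * (k-1) := Nat.mul_le_mul (by omega) (le_refl _)
    have hpd := Nat.div_add_mod' p (k-1)
    have h4 : ℓ * (k-1) = (k-1) * ℓ := mul_comm _ _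
    omega
  have hdivle : ∀ p, p ≤ (k-1)*ℓ → p / (k-1) ≤ ℓ := by
    intro p hp
    by_contra hc
    have h3 : (ℓ+1) * (k-1) ≤ p / (k-1) * (k-1) := Nat.mul_le_mul (by omega) (le_refl _)
    have hpd := Nat.div_add_mod' p (k-1)
    have h4 : (ℓ+1) * (k-1) = (k-1) * ℓ + (k-1) := by ring
    omega
  rcases lt_or_eq_of_le hmk with hlt | heq
  · -- Case m < k
    have hV : ℓ * (k - m) + 1 ≤ Vm.card := hV₁ (by omega)
    have hle : ℓ ≤ ℓ * (k - m) := by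
      have := Nat.mul_le_mul (le_refl ℓ) (show 1 ≤ k - m by omega)
      simpa using this
    set f := fA x₀ k ℓ m hm2 hlt W Vm with hfdef
    have hge : ∀ p : ℕ, ¬(1 ≤ p % (k-1) ∧ p % (k-1) ≤ m-1) → p % (k-1) ≠ 0 →
        m ≤ p % (k-1) := by
      intro p h h0
      by_contra hc
      exact h ⟨by omega, by omega⟩
    have hidxlt : ∀ p, p ≤ (k-1)*ℓ → ¬(1 ≤ p % (k-1) ∧ p % (k-1) ≤ m-1) →
        (if p % (k-1) = 0 then p / (k-1)
          else (ℓ+1) + (p / (k-1)) * (k-1-m) + (p % (k-1) - m)) < Vm.card := by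
      intro p hp h
      have hr : p % (k-1) < k-1 := Nat.mod_lt _ (by omega)
      split_ifs with h0
      · have := hdivle p hp
        omega
      · have hm' : m ≤ p % (k-1) := hge p h h0
        have ha : p / (k-1) < ℓ := hdivlt p hp (by omega)
        have h1 : (p / (k-1) + 1) * (k-1-m) ≤ ℓ * (k-1-m) :=
          Nat.mul_le_mul (by omega) (le_refl _)
        have h2 : (p / (k-1) + 1) * (k-1-m) = p / (k-1) * (k-1-m) + (k-1-m) := by ring
        have h3 : ℓ * (k - m) = ℓ * (k-1-m) + ℓ := by
          have e : k - m = (k-1-m) + 1 := by omega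
          rw [e, Nat.mul_add, Nat.mul_one]
        omega
    have key : ∀ p ≤ (k-1)*ℓ,
        (∀ j : Fin (m-1), (f p ∈ W j ↔ p % (k-1) = j.val + 1)) ∧
        (f p ∈ Vm ↔ (p % (k-1) = 0 ∨ m ≤ p % (k-1))) := by
      intro p hp
      have hr : p % (k-1) < k-1 := Nat.mod_lt _ (by omega)
      by_cases h : 1 ≤ p % (k-1) ∧ p % (k-1) ≤ m - 1
      · have ha : p / (k-1) < ℓ := hdivlt p hp h.1
        have hmem : f p ∈ W ⟨p % (k-1) - 1, by omega⟩ := by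
          rw [hfdef, fA, dif_pos h]
          exact ppick_mem x₀ (lt_of_lt_of_le ha (hW _))
        constructor
        · intro j
          constructor
          · intro hj
            have hjj : j = ⟨p % (k-1) - 1, by omega⟩ := by
              by_contra hne
              exact (Finset.disjoint_left.mp (hWW _ _ hne) hj) hmem
            have hv := hjj
            rw [Fin.ext_iff] at hv
            simp only [Fin.val_mk] at hv
            omega
          · intro hj
            have hjj : (⟨p % (k-1) - 1, by omega⟩ : Fin (m-1)) = j := by
              apply Fin.ext
              simp only
              omega
            rw [← hjj]
            exact hmem
        · constructor
          · intro hv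
            exact absurd hv (Finset.disjoint_left.mp (hWV _) hmem)
          · intro h0
            omega
      · have hmemV : f p ∈ Vm := by
          rw [hfdef, fA, dif_neg h]
          exact ppick_mem x₀ (hidxlt p hp h)
        have hor : p % (k-1) = 0 ∨ m ≤ p % (k-1) := by
          by_cases h0 : p % (k-1) = 0
          · exact Or.inl h0
          · exact Or.inr (hge p h h0)
        refine ⟨fun j => ⟨fun hj => ?_, fun hj => ?_⟩, fun _ => hor, fun _ => hmemV⟩
        · exact absurd hmemV (Finset.disjoint_left.mp (hWV j) hj)
        · exact absurd hor (by have := j.isLt; omega)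
    have hinj : Set.InjOn f (Set.Iio ((k-1)*ℓ+1)) := by
      intro p hp p' hp' hfe
      simp only [Set.mem_Iio] at hp hp'
      have hple : p ≤ (k-1)*ℓ := by omega
      have hple' : p' ≤ (k-1)*ℓ := by omega
      have hpd : p / (k-1) * (k-1) + p % (k-1) = p := Nat.div_add_mod' p (k-1)
      have hpd' : p' / (k-1) * (k-1) + p' % (k-1) = p' := Nat.div_add_mod' p' (k-1)
      have hr : p % (k-1) < k-1 := Nat.mod_lt _ (by omega)
      have hr' : p' % (k-1) < k-1 := Nat.mod_lt _ (by omega)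
      by_cases h1 : 1 ≤ p % (k-1) ∧ p % (k-1) ≤ m - 1 <;>
        by_cases h2 : 1 ≤ p' % (k-1) ∧ p' % (k-1) ≤ m - 1
      · -- both W
        simp only [hfdef, fA] at hfe
        rw [dif_pos h1, dif_pos h2] at hfe
        have ha : p / (k-1) < ℓ := hdivlt p hple h1.1
        have ha' : p' / (k-1) < ℓ := hdivlt p' hple' h2.1
        have hfin : (⟨p % (k-1) - 1, by omega⟩ : Fin (m-1)) = ⟨p' % (k-1) - 1, by omega⟩ := by
          by_contra hne
          have mA : ppick x₀ (W ⟨p % (k-1) - 1, by omega⟩) (p/(k-1)) ∈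
              W ⟨p % (k-1) - 1, by omega⟩ := ppick_mem x₀ (lt_of_lt_of_le ha (hW _))
          have mB : ppick x₀ (W ⟨p' % (k-1) - 1, by omega⟩) (p'/(k-1)) ∈
              W ⟨p' % (k-1) - 1, by omega⟩ := ppick_mem x₀ (lt_of_lt_of_le ha' (hW _))
          rw [hfe] at mA
          exact (Finset.disjoint_left.mp (hWW _ _ hne) mA) mB
        have hrr : p % (k-1) = p' % (k-1) := by
          have h' := hfin
          rw [Fin.mk.injEq] at h'
          omega
        rw [show (⟨p % (k-1) - 1, by omega⟩ : Fin (m-1)) = ⟨p' % (k-1) - 1, by omega⟩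
          from hfin] at hfe
        have hde := ppick_inj x₀ (lt_of_lt_of_le ha (hW _)) (lt_of_lt_of_le ha' (hW _)) hfe
        have he2 : p / (k-1) * (k-1) = p' / (k-1) * (k-1) := by rw [hde]
        omega
      · -- W vs Vm
        simp only [hfdef, fA] at hfe
        rw [dif_pos h1, dif_neg h2] at hfe
        have ha : p / (k-1) < ℓ := hdivlt p hple h1.1
        have mA : ppick x₀ (W ⟨p % (k-1) - 1, by omega⟩) (p/(k-1)) ∈
            W ⟨p % (k-1) - 1, by omega⟩ := ppick_mem x₀ (lt_of_lt_of_le ha (hW _))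
        have mB : ppick x₀ Vm _ ∈ Vm := ppick_mem x₀ (hidxlt p' hple' h2)
        rw [← hfe] at mB
        exact absurd mB (Finset.disjoint_left.mp (hWV _) mA)
      · -- Vm vs W
        simp only [hfdef, fA] at hfe
        rw [dif_neg h1, dif_pos h2] at hfe
        have ha' : p' / (k-1) < ℓ := hdivlt p' hple' h2.1
        have mA : ppick x₀ (W ⟨p' % (k-1) - 1, by omega⟩) (p'/(k-1)) ∈
            W ⟨p' % (k-1) - 1, by omega⟩ := ppick_mem x₀ (lt_of_lt_of_le ha' (hW _))
        have mB : ppick x₀ Vm _ ∈ Vm := ppick_mem x₀ (hidxlt p hple h1)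
        rw [hfe] at mB
        exact absurd mB (Finset.disjoint_left.mp (hWV _) mA)
      · -- both Vm
        simp only [hfdef, fA] at hfe
        rw [dif_neg h1, dif_neg h2] at hfe
        have hii := ppick_inj x₀ (hidxlt p hple h1) (hidxlt p' hple' h2) hfe
        have hdle := hdivle p hple
        have hdle' := hdivle p' hple'
        by_cases h0 : p % (k-1) = 0 <;> by_cases h0' : p' % (k-1) = 0
        · rw [if_pos h0, if_pos h0'] at hii
          have he2 : p / (k-1) * (k-1) = p' / (k-1) * (k-1) := by rw [hii]
          omega
        · rw [if_pos h0, if_neg h0'] at hii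
          have hm' : m ≤ p' % (k-1) := hge p' h2 h0'
          omega
        · rw [if_neg h0, if_pos h0'] at hii
          have hm' : m ≤ p % (k-1) := hge p h1 h0
          omega
        · rw [if_neg h0, if_neg h0'] at hii
          have hm1 : m ≤ p % (k-1) := hge p h1 h0
          have hm2' : m ≤ p' % (k-1) := hge p' h2 h0'
          have hcpos : 1 ≤ k - 1 - m := by omega
          obtain ⟨e1, e2⟩ := mul_add_cancel' (c := k-1-m)
            (show p % (k-1) - m < k-1-m by omega)
            (show p' % (k-1) - m < k-1-m by omega)
            (by omega : p / (k-1) * (k-1-m) + (p % (k-1) - m)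
              = p' / (k-1) * (k-1-m) + (p' % (k-1) - m))
          have he2 : p / (k-1) * (k-1) = p' / (k-1) * (k-1) := by rw [e1]
          omega
    refine ⟨f, hinj, ?_⟩
    intro i hi
    have hmuli := hmul i hi
    have hEle : ∀ p ∈ Finset.Ico (i*(k-1)) (i*(k-1)+k), p ≤ (k-1)*ℓ := by
      intro p hp
      rw [Finset.mem_Ico] at hp
      omega
    have hinjE : Set.InjOn f (Finset.Ico (i*(k-1)) (i*(k-1)+k)) := by
      apply hinj.mono
      intro p hp
      simp only [Finset.coe_Ico, Set.mem_Ico] at hp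
      simp only [Set.mem_Iio]
      omega
    constructor
    · intro j
      have hjlt := j.isLt
      rw [card_image_inter f _ {i*(k-1)+(j.val+1)} (W j) hinjE
        (by intro p hp; rw [Finset.mem_singleton] at hp; rw [Finset.mem_Ico]; omega)
        ?_]
      · exact Finset.card_singleton _
      · intro p hp
        rw [Finset.mem_Ico] at hp
        obtain ⟨q, hq, rfl⟩ : ∃ q, q < k ∧ p = i*(k-1)+q :=
          ⟨p - i*(k-1), by omega, by omega⟩
        rw [(key _ (hEle _ (by rw [Finset.mem_Ico]; omega))).1 j, Finset.mem_singleton]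
        by_cases hqk : q = k-1
        · have e : i*(k-1)+q = (i+1)*(k-1)+0 := by rw [hqk]; ring
          rw [e, mod_decomp (by omega)]
          omega
        · have hm0 : (i*(k-1)+q) % (k-1) = q := mod_decomp (by omega)
          rw [hm0]
          omega
    · rw [card_image_inter f _
        (insert (i*(k-1)) (Finset.Ico (i*(k-1)+m) (i*(k-1)+k))) Vm hinjE
        (by intro p hp
            simp only [Finset.mem_insert, Finset.mem_Ico] at hp
            rw [Finset.mem_Ico]
            omega)
        ?_]
      · rw [Finset.card_insert_of_notMem (by rw [Finset.mem_Ico]; omega), Nat.card_Ico]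
        omega
      · intro p hp
        rw [Finset.mem_Ico] at hp
        obtain ⟨q, hq, rfl⟩ : ∃ q, q < k ∧ p = i*(k-1)+q :=
          ⟨p - i*(k-1), by omega, by omega⟩
        rw [(key _ (hEle _ (by rw [Finset.mem_Ico]; omega))).2,
          Finset.mem_insert, Finset.mem_Ico]
        by_cases hqk : q = k-1
        · have e : i*(k-1)+q = (i+1)*(k-1)+0 := by rw [hqk]; ring
          rw [e, mod_decomp (by omega)]
          omega
        · have hm0 : (i*(k-1)+q) % (k-1) = q := mod_decomp (by omega)
          rw [hm0]
          omega
  · -- Case m = k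
    subst heq
    have hV : ℓ ≤ Vm.card := hV₂ rfl
    set f := fB x₀ m hm2 W Vm with hfdef
    have key : ∀ p ≤ (m-1)*ℓ,
        (∀ j : Fin (m-1), (f p ∈ W j ↔ (p % (m-1) = j.val + 1 ∨
          (p % (m-1) = 0 ∧ (p/(m-1)) % 2 = 0 ∧ j.val = m-2)))) ∧
        (f p ∈ Vm ↔ (p % (m-1) = 0 ∧ (p/(m-1)) % 2 = 1)) := by
      intro p hp
      have hr : p % (m-1) < m-1 := Nat.mod_lt _ (by omega)
      have hdle := hdivle p hp
      by_cases h0 : p % (m-1) = 0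
      · by_cases hpar : (p/(m-1)) % 2 = 0
        · have hmem : f p ∈ W ⟨m-2, by omega⟩ := by
            rw [hfdef, fB, if_pos h0, if_pos hpar]
            exact ppick_mem x₀ (lt_of_lt_of_le (by omega) (hW _))
          constructor
          · intro j
            constructor
            · intro hj
              have hjj : j = ⟨m-2, by omega⟩ := by
                by_contra hne
                exact (Finset.disjoint_left.mp (hWW _ _ hne) hj) hmem
              have hv := hjj
              rw [Fin.ext_iff] at hv
              simp only [Fin.val_mk] at hv
              omega
            · rintro (hj | ⟨-, -, hj⟩)
              · omega
              · have hjj : (⟨m-2, by omega⟩ : Fin (m-1)) = j := Fin.ext (by simp; omega)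
                rw [← hjj]
                exact hmem
          · constructor
            · intro hv
              exact absurd hv (Finset.disjoint_left.mp (hWV _) hmem)
            · intro hc
              omega
        · have hmem : f p ∈ Vm := by
            rw [hfdef, fB, if_pos h0, if_neg hpar]
            exact ppick_mem x₀ (lt_of_lt_of_le (by omega) hV)
          constructor
          · intro j
            constructor
            · intro hj
              exact absurd hmem (Finset.disjoint_left.mp (hWV j) hj)
            · rintro (hj | ⟨-, hj, -⟩)
              · omega
              · omega
          · exact ⟨fun _ => ⟨h0, by omega⟩, fun _ => hmem⟩
      · have ha : p / (m-1) < ℓ := hdivlt p hp (by omega)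
        have hmem : f p ∈ W ⟨p % (m-1) - 1,
            by have := Nat.mod_lt p (show 0 < m-1 by omega); omega⟩ := by
          rw [hfdef, fB, if_neg h0]
          exact ppick_mem x₀ (lt_of_lt_of_le ha (hW _))
        constructor
        · intro j
          constructor
          · intro hj
            have hjj : j = ⟨p % (m-1) - 1, by omega⟩ := by
              by_contra hne
              exact (Finset.disjoint_left.mp (hWW _ _ hne) hj) hmem
            have hv := hjj
            rw [Fin.ext_iff] at hv
            simp only [Fin.val_mk] at hv
            omega
          · rintro (hj | ⟨hj, -, -⟩)
            · have hjj : (⟨p % (m-1) - 1, by omega⟩ : Fin (m-1)) = j :=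
                Fin.ext (by simp; omega)
              rw [← hjj]
              exact hmem
            · omega
        · constructor
          · intro hv
            exact absurd hv (Finset.disjoint_left.mp (hWV _) hmem)
          · intro hc
            omega
    have hinj : Set.InjOn f (Set.Iio ((m-1)*ℓ+1)) := by
      intro p hp p' hp' hfe
      simp only [Set.mem_Iio] at hp hp'
      have hple : p ≤ (m-1)*ℓ := by omega
      have hple' : p' ≤ (m-1)*ℓ := by omega
      have hpd : p / (m-1) * (m-1) + p % (m-1) = p := Nat.div_add_mod' p (m-1)
      have hpd' : p' / (m-1) * (m-1) + p' % (m-1) = p' := Nat.div_add_mod' p' (m-1)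
      have hr : p % (m-1) < m-1 := Nat.mod_lt _ (by omega)
      have hr' : p' % (m-1) < m-1 := Nat.mod_lt _ (by omega)
      have hdle := hdivle p hple
      have hdle' := hdivle p' hple'
      have hda : p / (m-1) < ℓ ∨ 1 ≤ p % (m-1) → True := fun _ => trivial
      by_cases h0 : p % (m-1) = 0 <;> by_cases h0' : p' % (m-1) = 0
      · simp only [hfdef, fB] at hfe
        rw [if_pos h0, if_pos h0'] at hfe
        by_cases hpar : (p/(m-1)) % 2 = 0 <;> by_cases hpar' : (p'/(m-1)) % 2 = 0
        · rw [if_pos hpar, if_pos hpar'] at hfe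
          have hde := ppick_inj x₀ (lt_of_lt_of_le (by omega) (hW _))
            (lt_of_lt_of_le (by omega) (hW _)) hfe
          have hdd : p / (m-1) = p' / (m-1) := by omega
          have he2 : p / (m-1) * (m-1) = p' / (m-1) * (m-1) := by rw [hdd]
          omega
        · rw [if_pos hpar, if_neg hpar'] at hfe
          have mA : ppick x₀ (W ⟨m-2, by omega⟩) (p/(m-1)/2) ∈ W ⟨m-2, by omega⟩ :=
            ppick_mem x₀ (lt_of_lt_of_le (by omega) (hW _))
          have mB : ppick x₀ Vm (p'/(m-1)/2) ∈ Vm :=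
            ppick_mem x₀ (lt_of_lt_of_le (by omega) hV)
          rw [← hfe] at mB
          exact absurd mB (Finset.disjoint_left.mp (hWV _) mA)
        · rw [if_neg hpar, if_pos hpar'] at hfe
          have mA : ppick x₀ (W ⟨m-2, by omega⟩) (p'/(m-1)/2) ∈ W ⟨m-2, by omega⟩ :=
            ppick_mem x₀ (lt_of_lt_of_le (by omega) (hW _))
          have mB : ppick x₀ Vm (p/(m-1)/2) ∈ Vm :=
            ppick_mem x₀ (lt_of_lt_of_le (by omega) hV)
          rw [hfe] at mB
          exact absurd mB (Finset.disjoint_left.mp (hWV _) mA)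
        · rw [if_neg hpar, if_neg hpar'] at hfe
          have hde := ppick_inj x₀ (lt_of_lt_of_le (by omega) hV)
            (lt_of_lt_of_le (by omega) hV) hfe
          have hdd : p / (m-1) = p' / (m-1) := by omega
          have he2 : p / (m-1) * (m-1) = p' / (m-1) * (m-1) := by rw [hdd]
          omega
      · simp only [hfdef, fB] at hfe
        rw [if_pos h0, if_neg h0'] at hfe
        have ha' : p' / (m-1) < ℓ := hdivlt p' hple' (by omega)
        have mB : ppick x₀ (W ⟨p' % (m-1) - 1, by omega⟩) (p'/(m-1)) ∈
            W ⟨p' % (m-1) - 1, by omega⟩ := ppick_mem x₀ (lt_of_lt_of_le ha' (hW _))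
        by_cases hpar : (p/(m-1)) % 2 = 0
        · rw [if_pos hpar] at hfe
          have mA : ppick x₀ (W ⟨m-2, by omega⟩) (p/(m-1)/2) ∈ W ⟨m-2, by omega⟩ :=
            ppick_mem x₀ (lt_of_lt_of_le (by omega) (hW _))
          have hne : (⟨m-2, by omega⟩ : Fin (m-1)) ≠ ⟨p' % (m-1) - 1, by omega⟩ := by
            intro hc
            rw [Fin.mk.injEq] at hc
            omega
          rw [hfe] at mA
          exact absurd mB (Finset.disjoint_left.mp (hWW _ _ hne) mA)
        · rw [if_neg hpar] at hfe
          have mA : ppick x₀ Vm (p/(m-1)/2) ∈ Vm :=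
            ppick_mem x₀ (lt_of_lt_of_le (by omega) hV)
          rw [hfe] at mA
          exact absurd mA (Finset.disjoint_left.mp (hWV _) mB)
      · simp only [hfdef, fB] at hfe
        rw [if_neg h0, if_pos h0'] at hfe
        have ha : p / (m-1) < ℓ := hdivlt p hple (by omega)
        have mB : ppick x₀ (W ⟨p % (m-1) - 1, by omega⟩) (p/(m-1)) ∈
            W ⟨p % (m-1) - 1, by omega⟩ := ppick_mem x₀ (lt_of_lt_of_le ha (hW _))
        by_cases hpar : (p'/(m-1)) % 2 = 0
        · rw [if_pos hpar] at hfe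
          have mA : ppick x₀ (W ⟨m-2, by omega⟩) (p'/(m-1)/2) ∈ W ⟨m-2, by omega⟩ :=
            ppick_mem x₀ (lt_of_lt_of_le (by omega) (hW _))
          have hne : (⟨m-2, by omega⟩ : Fin (m-1)) ≠ ⟨p % (m-1) - 1, by omega⟩ := by
            intro hc
            rw [Fin.mk.injEq] at hc
            omega
          rw [← hfe] at mA
          exact absurd mB (Finset.disjoint_left.mp (hWW _ _ hne) mA)
        · rw [if_neg hpar] at hfe
          have mA : ppick x₀ Vm (p'/(m-1)/2) ∈ Vm :=
            ppick_mem x₀ (lt_of_lt_of_le (by omega) hV)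
          rw [← hfe] at mA
          exact absurd mA (Finset.disjoint_left.mp (hWV _) mB)
      · simp only [hfdef, fB] at hfe
        rw [if_neg h0, if_neg h0'] at hfe
        have ha : p / (m-1) < ℓ := hdivlt p hple (by omega)
        have ha' : p' / (m-1) < ℓ := hdivlt p' hple' (by omega)
        have hfin : (⟨p % (m-1) - 1, by omega⟩ : Fin (m-1))
            = ⟨p' % (m-1) - 1, by omega⟩ := by
          by_contra hne
          have mA : ppick x₀ (W ⟨p % (m-1) - 1, by omega⟩) (p/(m-1)) ∈
              W ⟨p % (m-1) - 1, by omega⟩ := ppick_mem x₀ (lt_of_lt_of_le ha (hW _))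
          have mB : ppick x₀ (W ⟨p' % (m-1) - 1, by omega⟩) (p'/(m-1)) ∈
              W ⟨p' % (m-1) - 1, by omega⟩ := ppick_mem x₀ (lt_of_lt_of_le ha' (hW _))
          rw [hfe] at mA
          exact (Finset.disjoint_left.mp (hWW _ _ hne) mA) mB
        have hrr : p % (m-1) = p' % (m-1) := by
          have h' := hfin
          rw [Fin.mk.injEq] at h'
          omega
        rw [show (⟨p % (m-1) - 1, by omega⟩ : Fin (m-1)) = ⟨p' % (m-1) - 1, by omega⟩
          from hfin] at hfe
        have hde := ppick_inj x₀ (lt_of_lt_of_le ha (hW _)) (lt_of_lt_of_le ha' (hW _)) hfe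
        have he2 : p / (m-1) * (m-1) = p' / (m-1) * (m-1) := by rw [hde]
        omega
    refine ⟨f, hinj, ?_⟩
    intro i hi
    have hmuli := hmul i hi
    have hEle : ∀ p ∈ Finset.Ico (i*(m-1)) (i*(m-1)+m), p ≤ (m-1)*ℓ := by
      intro p hp
      rw [Finset.mem_Ico] at hp
      omega
    have hinjE : Set.InjOn f (Finset.Ico (i*(m-1)) (i*(m-1)+m)) := by
      apply hinj.mono
      intro p hp
      simp only [Finset.coe_Ico, Set.mem_Ico] at hp
      simp only [Set.mem_Iio]
      omega
    have hdivE : ∀ q, q < m → ((i*(m-1)+q) % (m-1) = (if q = m-1 then 0 else q)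
        ∧ (i*(m-1)+q) / (m-1) = (if q = m-1 then i+1 else i)) := by
      intro q hq
      by_cases hqk : q = m-1
      · have e : i*(m-1)+q = (i+1)*(m-1)+0 := by rw [hqk]; ring
        rw [e, mod_decomp (by omega), div_decomp (by omega), if_pos hqk, if_pos hqk]
        exact ⟨rfl, rfl⟩
      · rw [mod_decomp (by omega), div_decomp (by omega), if_neg hqk, if_neg hqk]
        exact ⟨rfl, rfl⟩
    constructor
    · intro j
      have hjlt := j.isLt
      by_cases hj : j.val = m-2
      · rw [card_image_inter f _ {i*(m-1) + (if i % 2 = 0 then 0 else m-1)} (W j) hinjE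
          (by intro p hp
              rw [Finset.mem_singleton] at hp
              rw [Finset.mem_Ico]
              split_ifs at hp <;> omega)
          ?_]
        · exact Finset.card_singleton _
        · intro p hp
          rw [Finset.mem_Ico] at hp
          obtain ⟨q, hq, rfl⟩ : ∃ q, q < m ∧ p = i*(m-1)+q :=
            ⟨p - i*(m-1), by omega, by omega⟩
          obtain ⟨hmq, hdq⟩ := hdivE q hq
          rw [(key _ (hEle _ (by rw [Finset.mem_Ico]; omega))).1 j, Finset.mem_singleton,
            hmq, hdq]
          split_ifs with hc1 hc2 hc2 <;> (try simp only [false_or, true_and, and_true, or_false]) <;> omega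
      · rw [card_image_inter f _ {i*(m-1)+(j.val+1)} (W j) hinjE
          (by intro p hp; rw [Finset.mem_singleton] at hp; rw [Finset.mem_Ico]; omega)
          ?_]
        · exact Finset.card_singleton _
        · intro p hp
          rw [Finset.mem_Ico] at hp
          obtain ⟨q, hq, rfl⟩ : ∃ q, q < m ∧ p = i*(m-1)+q :=
            ⟨p - i*(m-1), by omega, by omega⟩
          obtain ⟨hmq, hdq⟩ := hdivE q hq
          rw [(key _ (hEle _ (by rw [Finset.mem_Ico]; omega))).1 j, Finset.mem_singleton,
            hmq, hdq]
          split_ifs with hc1 <;> (try simp only [false_or, true_and, and_true, or_false]) <;> omega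
    · rw [card_image_inter f _ {i*(m-1) + (if i % 2 = 0 then m-1 else 0)} Vm hinjE
        (by intro p hp
            rw [Finset.mem_singleton] at hp
            rw [Finset.mem_Ico]
            split_ifs at hp <;> omega)
        ?_]
      · rw [Finset.card_singleton]
        omega
      · intro p hp
        rw [Finset.mem_Ico] at hp
        obtain ⟨q, hq, rfl⟩ : ∃ q, q < m ∧ p = i*(m-1)+q :=
          ⟨p - i*(m-1), by omega, by omega⟩
        obtain ⟨hmq, hdq⟩ := hdivE q hq
        rw [(key _ (hEle _ (by rw [Finset.mem_Ico]; omega))).2, Finset.mem_singleton,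
          hmq, hdq]
        split_ifs with hc1 hc2 hc2 <;> (try simp only [false_or, true_and, and_true, or_false]) <;> omega
end
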